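/- (Theorem 3.3(ii): L¹ bound of the basic function in the first variable, case ρ ≥ 1) Let θ ∈ ℝ with sin θ ≠ 0 and ρ ≥ 1. Let φ ∈ L¹(ℝ), let the functions x ↦ (1+|x|^{ρ−1})χ(x) and x ↦ (1+|x|^{ρ−1})ψ(x) belong to L¹(ℝ), and let 0 < C_φ = ∫_ℝ |φ̂(ω)|²/|ω| dω < ∞. Then for all v, w ∈ ℝ with v ≠ w, ∫_ℝ |D^α(u,v,w)| du ≤ C_φ^{−1} · 2^{ρ−1} · |v−w|^{−ρ} · [ ‖ψ(x)x^{ρ−1}‖₁ · ‖χ‖₁ + ‖χ(x)x^{ρ−1}‖₁ · ‖ψ‖₁ ] · ‖φ‖₁. -/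

import Mathlib

open MeasureTheory Complex ENNReal

/-- Pushforward of Lebesgue by an affine map `x ↦ (x - b) / a`. -/
lemma map_sub_div (a b : ℝ) (ha : a ≠ 0) :
    Measure.map (fun x : ℝ => (x - b) / a) volume = ENNReal.ofReal |a| • volume := by
  have h1 : (fun x : ℝ => (x - b) / a) = (fun x : ℝ => a⁻¹ * x) ∘ (fun x : ℝ => x + (-b)) := by
    ext x; simp only [Function.comp_apply]; ring
  rw [h1, ← Measure.map_map (measurable_const_mul _) (measurable_add_const _)]
  rw [map_add_right_eq_self volume (-b), Real.map_volume_mul_left (inv_ne_zero ha)]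
  congr 1
  rw [inv_inv]

lemma lintegral_sub_div (F : ℝ → ℝ≥0∞) (hF : Measurable F) (a b : ℝ) (ha : a ≠ 0) :
    ∫⁻ x : ℝ, F ((x - b) / a) = ENNReal.ofReal |a| * ∫⁻ x, F x := by
  have hm : Measurable (fun x : ℝ => (x - b) / a) := (measurable_id.sub_const b).div_const a
  rw [← lintegral_map hF hm, map_sub_div a b ha, lintegral_smul_measure, smul_eq_mul]

lemma qmp_sub_div (a b : ℝ) (ha : a ≠ 0) :
    Measure.QuasiMeasurePreserving (fun x : ℝ => (x - b) / a) volume volume := by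
  refine ⟨(measurable_id.sub_const b).div_const a, ?_⟩
  rw [map_sub_div a b ha]
  exact Measure.smul_absolutelyContinuous

lemma qmp_sub_div' (a c : ℝ) (ha : a ≠ 0) :
    Measure.QuasiMeasurePreserving (fun x : ℝ => (c - x) / a) volume volume := by
  have : (fun x : ℝ => (c - x) / a) = (fun x : ℝ => (x - c) / (-a)) := by
    ext x; rw [div_neg, ← neg_div, neg_sub]
  rw [this]
  exact qmp_sub_div (-a) c (neg_ne_zero.2 ha)

lemma lintegral_image_eq_lintegral_abs_deriv_mul' {s : Set ℝ} {f f' : ℝ → ℝ} (hs : MeasurableSet s)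
    (hf' : ∀ x ∈ s, HasDerivWithinAt f (f' x) s x) (hf : Set.InjOn f s) (g : ℝ → ℝ≥0∞) :
    ∫⁻ x in f '' s, g x = ∫⁻ x in s, ENNReal.ofReal |f' x| * g (f x) := by
  simpa only [ContinuousLinearMap.det_toSpanSingleton] using
    lintegral_image_eq_lintegral_abs_det_fderiv_mul volume hs
      (fun x hx => (hf' x hx).hasFDerivWithinAt) hf g

/-- key rpow triangle bound -/
lemma rpow_bound {ρ : ℝ} (hρ : 1 ≤ ρ) (s t : ℝ) :
    |t| ^ (ρ - 1) ≤ 2 ^ (ρ - 1) * (|s| ^ (ρ - 1) + |s + t| ^ (ρ - 1)) := by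
  have h1 : |t| ≤ |s| + |s + t| := by
    calc |t| = |(s + t) - s| := by ring_nf
    _ ≤ |s + t| + |s| := abs_sub _ _
    _ = |s| + |s + t| := by ring
  have h2 : |s| + |s + t| ≤ 2 * max |s| |s + t| := by
    rcases le_total |s| |s + t| with h | h
    · rw [max_eq_right h]; linarith
    · rw [max_eq_left h]; linarith
  have h3 : |t| ^ (ρ - 1) ≤ (2 * max |s| |s + t|) ^ (ρ - 1) :=
    Real.rpow_le_rpow (abs_nonneg t) (h1.trans h2) (by linarith)
  refine h3.trans ?_
  rw [Real.mul_rpow (by norm_num) (le_max_iff.2 (Or.inl (abs_nonneg s)))]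
  gcongr
  rcases max_cases |s| |s + t| with ⟨h, _⟩ | ⟨h, _⟩ <;> rw [h]
  · nlinarith [Real.rpow_nonneg (abs_nonneg (s+t)) (ρ-1), Real.rpow_nonneg (abs_nonneg s) (ρ-1)]
  · nlinarith [Real.rpow_nonneg (abs_nonneg (s+t)) (ρ-1), Real.rpow_nonneg (abs_nonneg s) (ρ-1)]

lemma ofReal_norm_eq_coe_nnnorm {E : Type*} [SeminormedAddCommGroup E] (a : E) :
    ENNReal.ofReal ‖a‖ = (‖a‖₊ : ℝ≥0∞) := by
  rw [ofReal_norm, enorm_eq_nnnorm]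

lemma coe_nnnorm_real_mul (r : ℝ) (z : ℂ) (hr : 0 ≤ r) :
    (‖((r : ℝ) : ℂ) * z‖₊ : ℝ≥0∞) = ENNReal.ofReal r * (‖z‖₊ : ℝ≥0∞) := by
  rw [nnnorm_mul, ENNReal.coe_mul, ← ofReal_norm_eq_coe_nnnorm, Complex.norm_real,
    Real.norm_eq_abs, _root_.abs_of_nonneg hr]

/-- The fractional wavelet family `φ^α_{a,b}(t) = e^{(-i/2)(t²-b²)cot θ} |a|^{-ρ} φ((t-b)/a)`. -/
noncomputable def fracWav (θ ρ : ℝ) (φ : ℝ → ℂ) (a b t : ℝ) : ℂ :=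
  Complex.exp ((-(Complex.I / 2)) * ((t : ℂ) ^ 2 - (b : ℂ) ^ 2) *
      ((Real.cos θ / Real.sin θ : ℝ) : ℂ)) *
    ((|a| ^ (-ρ) : ℝ) : ℂ) * φ ((t - b) / a)

/-- The general novel fractional wavelet transform (GNFrWT). -/
noncomputable def GNFrWT (θ ρ : ℝ) (φ h : ℝ → ℂ) (a b : ℝ) : ℂ :=
  ∫ t : ℝ, h t * (starRingEnd ℂ) (fracWav θ ρ φ a b t)

/-- The admissibility constant `C_φ = ∫ |φ̂(ω)|²/|ω| dω`. -/
noncomputable def admConst (φ : ℝ → ℂ) : ℝ :=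
  ∫ ω : ℝ, ‖FourierTransform.fourier φ ω‖ ^ 2 / |ω|

/-- The basic function `D^α(u,v,w)` associated with the GNFrWT. -/
noncomputable def basicD (θ ρ : ℝ) (ψ χ φ : ℝ → ℂ) (u v w : ℝ) : ℂ :=
  ((admConst φ : ℝ) : ℂ)⁻¹ *
    ∫ a in Set.Ioi (0 : ℝ), ∫ b : ℝ,
      (starRingEnd ℂ) (fracWav θ ρ ψ a b w) * (starRingEnd ℂ) (fracWav θ ρ χ a b v) *
        fracWav θ ρ φ a b u * ((|a| ^ (2 * ρ - 3) : ℝ) : ℂ)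

/-- The convolution `#^α` associated with the GNFrWT. -/
noncomputable def convAlpha (θ ρ : ℝ) (ψ χ φ h g : ℝ → ℂ) (u : ℝ) : ℂ :=
  ∫ w : ℝ, ∫ v : ℝ, basicD θ ρ ψ χ φ u v w * h w * g v

lemma norm_fracWav (θ ρ : ℝ) (g : ℝ → ℂ) (a b t : ℝ) :
    ‖fracWav θ ρ g a b t‖ = |a| ^ (-ρ) * ‖g ((t - b) / a)‖ := by
  unfold fracWav
  have hz : (-(Complex.I / 2)) * ((t : ℂ) ^ 2 - (b : ℂ) ^ 2) *
      ((Real.cos θ / Real.sin θ : ℝ) : ℂ) =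
      ((-(t ^ 2 - b ^ 2) * (Real.cos θ / Real.sin θ) / 2 : ℝ) : ℂ) * Complex.I := by
    push_cast; ring
  rw [hz, norm_mul, norm_mul, Complex.norm_exp_ofReal_mul_I, one_mul,
    Complex.norm_real, Real.norm_eq_abs, _root_.abs_of_nonneg (Real.rpow_nonneg (abs_nonneg a) _)]

lemma nnnorm_fracWav (θ ρ : ℝ) (g : ℝ → ℂ) (a b t : ℝ) :
    (‖fracWav θ ρ g a b t‖₊ : ℝ≥0∞) = ENNReal.ofReal (|a| ^ (-ρ)) * (‖g ((t - b) / a)‖₊ : ℝ≥0∞) := by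
  rw [← ofReal_norm_eq_coe_nnnorm, ← ofReal_norm_eq_coe_nnnorm, norm_fracWav,
    ENNReal.ofReal_mul (Real.rpow_nonneg (abs_nonneg a) _)]

/-- Theorem 3.3(ii): L¹ bound of the basic function in the first variable, case `ρ ≥ 1`. -/
theorem basicD_L1_first' (θ ρ : ℝ) (hθ : Real.sin θ ≠ 0) (hρ : 1 ≤ ρ)
    (ψ φ χ : ℝ → ℂ) (hφ : MemLp φ 1 volume)
    (hχ : MemLp (fun x : ℝ => ((1 + |x| ^ (ρ - 1) : ℝ) : ℂ) * χ x) 1 volume)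
    (hψ : MemLp (fun x : ℝ => ((1 + |x| ^ (ρ - 1) : ℝ) : ℂ) * ψ x) 1 volume)
    (hCpos : 0 < admConst φ)
    (hCfin : Integrable (fun ω : ℝ => ‖FourierTransform.fourier φ ω‖ ^ 2 / |ω|))
    (v w : ℝ) (hvw : v ≠ w) :
    (∫ u : ℝ, ‖basicD θ ρ ψ χ φ u v w‖) ≤
      (admConst φ)⁻¹ * 2 ^ (ρ - 1) * |v - w| ^ (-ρ) *
        ((eLpNorm (fun x : ℝ => ψ x * ((|x| ^ (ρ - 1) : ℝ) : ℂ)) 1 volume).toReal *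
            (eLpNorm χ 1 volume).toReal +
          (eLpNorm (fun x : ℝ => χ x * ((|x| ^ (ρ - 1) : ℝ) : ℂ)) 1 volume).toReal *
            (eLpNorm ψ 1 volume).toReal) *
        (eLpNorm φ 1 volume).toReal := by
  classical
  have hc : v - w ≠ 0 := sub_ne_zero.2 hvw
  have hρ0 : (0:ℝ) ≤ ρ - 1 := by linarith
  -- a.e. strong measurability of ψ and χ
  have hcoefpos : ∀ x : ℝ, (0:ℝ) < 1 + |x| ^ (ρ - 1) := fun x => by positivity
  have hsm : ∀ g : ℝ → ℂ, MemLp (fun x : ℝ => ((1 + |x| ^ (ρ - 1) : ℝ) : ℂ) * g x) 1 volume →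
      AEStronglyMeasurable g volume := by
    intro g hg
    have h2 : AEStronglyMeasurable (fun x : ℝ => (((1 + |x| ^ (ρ - 1) : ℝ) : ℂ))⁻¹ *
        (((1 + |x| ^ (ρ - 1) : ℝ) : ℂ) * g x)) volume := by
      refine AEStronglyMeasurable.mul ?_ hg.aestronglyMeasurable
      apply Measurable.aestronglyMeasurable
      fun_prop
    refine h2.congr (Filter.Eventually.of_forall fun x => ?_)
    dsimp only
    rw [← mul_assoc, inv_mul_cancel₀ (by exact_mod_cast (hcoefpos x).ne'), one_mul]
  obtain ⟨ψ', hψ'm, hψae⟩ : ∃ g, StronglyMeasurable g ∧ ψ =ᵐ[volume] g :=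
    ⟨(hsm ψ hψ).mk ψ, (hsm ψ hψ).stronglyMeasurable_mk, (hsm ψ hψ).ae_eq_mk⟩
  obtain ⟨χ', hχ'm, hχae⟩ : ∃ g, StronglyMeasurable g ∧ χ =ᵐ[volume] g :=
    ⟨(hsm χ hχ).mk χ, (hsm χ hχ).stronglyMeasurable_mk, (hsm χ hχ).ae_eq_mk⟩
  obtain ⟨φ', hφ'm, hφae⟩ : ∃ g, StronglyMeasurable g ∧ φ =ᵐ[volume] g :=
    ⟨hφ.1.mk φ, hφ.1.stronglyMeasurable_mk, hφ.1.ae_eq_mk⟩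
  set Ψ : ℝ → ℝ≥0∞ := fun x => (‖ψ' x‖₊ : ℝ≥0∞) with hΨdef
  set Χ : ℝ → ℝ≥0∞ := fun x => (‖χ' x‖₊ : ℝ≥0∞) with hΧdef
  set Φ : ℝ → ℝ≥0∞ := fun x => (‖φ' x‖₊ : ℝ≥0∞) with hΦdef
  have hΨm : Measurable Ψ := hψ'm.measurable.nnnorm.coe_nnreal_ennreal
  have hΧm : Measurable Χ := hχ'm.measurable.nnnorm.coe_nnreal_ennreal
  have hΦm : Measurable Φ := hφ'm.measurable.nnnorm.coe_nnreal_ennreal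
  set P : ℝ≥0∞ := ∫⁻ x, Φ x with hPdef
  set Bψ : ℝ≥0∞ := ∫⁻ x, Ψ x with hBψdef
  set Bχ : ℝ≥0∞ := ∫⁻ x, Χ x with hBχdef
  set Aψ : ℝ≥0∞ := ∫⁻ x, ENNReal.ofReal (|x| ^ (ρ - 1)) * Ψ x with hAψdef
  set Aχ : ℝ≥0∞ := ∫⁻ x, ENNReal.ofReal (|x| ^ (ρ - 1)) * Χ x with hAχdef
  -- identities with eLpNorms
  have hBψe : eLpNorm ψ 1 volume = Bψ := by
    rw [eLpNorm_one_eq_lintegral_enorm]; simp only [enorm_eq_nnnorm]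
    exact lintegral_congr_ae (hψae.mono fun x hx => by rw [hΨdef]; simp [hx])
  have hBχe : eLpNorm χ 1 volume = Bχ := by
    rw [eLpNorm_one_eq_lintegral_enorm]; simp only [enorm_eq_nnnorm]
    exact lintegral_congr_ae (hχae.mono fun x hx => by rw [hΧdef]; simp [hx])
  have hPe : eLpNorm φ 1 volume = P := by
    rw [eLpNorm_one_eq_lintegral_enorm]; simp only [enorm_eq_nnnorm]
    exact lintegral_congr_ae (hφae.mono fun x hx => by rw [hΦdef]; simp [hx])
  have hAe : ∀ (g g' : ℝ → ℂ), g =ᵐ[volume] g' →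
      eLpNorm (fun x : ℝ => g x * ((|x| ^ (ρ - 1) : ℝ) : ℂ)) 1 volume =
        ∫⁻ x, ENNReal.ofReal (|x| ^ (ρ - 1)) * (‖g' x‖₊ : ℝ≥0∞) := by
    intro g g' hg
    rw [eLpNorm_one_eq_lintegral_enorm]; simp only [enorm_eq_nnnorm]
    refine lintegral_congr_ae (hg.mono fun x hx => ?_)
    dsimp only
    rw [mul_comm (g x), coe_nnnorm_real_mul _ _ (Real.rpow_nonneg (abs_nonneg x) _), hx]
  have hAψe : eLpNorm (fun x : ℝ => ψ x * ((|x| ^ (ρ - 1) : ℝ) : ℂ)) 1 volume = Aψ :=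
    hAe ψ ψ' hψae
  have hAχe : eLpNorm (fun x : ℝ => χ x * ((|x| ^ (ρ - 1) : ℝ) : ℂ)) 1 volume = Aχ :=
    hAe χ χ' hχae
  -- finiteness
  have hfin : ∀ (g g' : ℝ → ℂ), g =ᵐ[volume] g' →
      MemLp (fun x : ℝ => ((1 + |x| ^ (ρ - 1) : ℝ) : ℂ) * g x) 1 volume →
      (∫⁻ x, ENNReal.ofReal (|x| ^ (ρ - 1)) * (‖g' x‖₊ : ℝ≥0∞)) < ⊤ ∧
        (∫⁻ x, (‖g' x‖₊ : ℝ≥0∞)) < ⊤ := by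
    intro g g' hg hgL
    have hM := hgL.2
    rw [eLpNorm_one_eq_lintegral_enorm] at hM; simp only [enorm_eq_nnnorm] at hM
    constructor
    · refine lt_of_le_of_lt (le_of_le_of_eq (lintegral_mono_ae (hg.mono fun x hx => ?_))
        (lintegral_congr_ae (Filter.EventuallyEq.rfl))) hM
      rw [coe_nnnorm_real_mul _ _ (hcoefpos x).le, ← hx]
      exact mul_le_mul_left (ENNReal.ofReal_le_ofReal (by simp)) _
    · refine lt_of_le_of_lt (lintegral_mono_ae (hg.mono fun x hx => ?_)) hM
      rw [coe_nnnorm_real_mul _ _ (hcoefpos x).le, ← hx]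
      calc (‖g x‖₊ : ℝ≥0∞) = 1 * (‖g x‖₊ : ℝ≥0∞) := (one_mul _).symm
      _ ≤ ENNReal.ofReal (1 + |x| ^ (ρ - 1)) * (‖g x‖₊ : ℝ≥0∞) := by
          refine mul_le_mul_left ?_ _
          rw [← ENNReal.ofReal_one]
          exact ENNReal.ofReal_le_ofReal (by simp [Real.rpow_nonneg (abs_nonneg x)])
  have hAψfin : Aψ < ⊤ := (hfin ψ ψ' hψae hψ).1
  have hBψfin : Bψ < ⊤ := (hfin ψ ψ' hψae hψ).2
  have hAχfin : Aχ < ⊤ := (hfin χ χ' hχae hχ).1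
  have hBχfin : Bχ < ⊤ := (hfin χ χ' hχae hχ).2
  have hPfin : P < ⊤ := by
    rw [← hPe]; exact hφ.2
  -- the dominating kernel
  set T : ℝ → ℝ → ℝ → ℝ≥0∞ := fun a b u =>
    (ENNReal.ofReal (a ^ (-ρ - 3)) * (Ψ ((w - b) / a) * Χ ((v - b) / a))) * Φ ((u - b) / a)
    with hTdef
  have hconj : ∀ z : ℂ, ‖(starRingEnd ℂ) z‖₊ = ‖z‖₊ := fun z => by
    rw [starRingEnd_apply, nnnorm_star]
  have claimA : ∀ u : ℝ, (‖basicD θ ρ ψ χ φ u v w‖₊ : ℝ≥0∞) ≤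
      ENNReal.ofReal (admConst φ)⁻¹ * ∫⁻ a in Set.Ioi (0:ℝ), ∫⁻ b, T a b u := by
    intro u
    unfold basicD
    rw [nnnorm_mul, ENNReal.coe_mul]
    have hCnn : (‖(((admConst φ : ℝ) : ℂ))⁻¹‖₊ : ℝ≥0∞) = ENNReal.ofReal (admConst φ)⁻¹ := by
      rw [← ofReal_norm_eq_coe_nnnorm, norm_inv, Complex.norm_real, Real.norm_eq_abs,
        _root_.abs_of_pos hCpos]
    rw [hCnn]
    refine mul_le_mul_right ?_ _
    refine le_trans (enorm_integral_le_lintegral_enorm _) ?_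
    refine lintegral_mono_ae ((ae_restrict_iff' measurableSet_Ioi).2
      (Filter.Eventually.of_forall fun a ha => ?_))
    refine le_trans (enorm_integral_le_lintegral_enorm _) ?_
    refine le_of_eq (lintegral_congr_ae ?_)
    have ha0 : (0:ℝ) < a := ha
    have e1 : (fun b : ℝ => (‖ψ ((w - b) / a)‖₊ : ℝ≥0∞)) =ᵐ[volume]
        fun b => Ψ ((w - b) / a) := by
      have base : (fun x => (‖ψ x‖₊ : ℝ≥0∞)) =ᵐ[volume] Ψ :=
        hψae.mono fun x hx => by rw [hΨdef]; simp [hx]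
      simpa [Function.comp_def] using (qmp_sub_div' a w ha0.ne').ae_eq_comp base
    have e2 : (fun b : ℝ => (‖χ ((v - b) / a)‖₊ : ℝ≥0∞)) =ᵐ[volume]
        fun b => Χ ((v - b) / a) := by
      have base : (fun x => (‖χ x‖₊ : ℝ≥0∞)) =ᵐ[volume] Χ :=
        hχae.mono fun x hx => by rw [hΧdef]; simp [hx]
      simpa [Function.comp_def] using (qmp_sub_div' a v ha0.ne').ae_eq_comp base
    have e3 : (fun b : ℝ => (‖φ ((u - b) / a)‖₊ : ℝ≥0∞)) =ᵐ[volume]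
        fun b => Φ ((u - b) / a) := by
      have base : (fun x => (‖φ x‖₊ : ℝ≥0∞)) =ᵐ[volume] Φ :=
        hφae.mono fun x hx => by rw [hΦdef]; simp [hx]
      simpa [Function.comp_def] using (qmp_sub_div' a u ha0.ne').ae_eq_comp base
    filter_upwards [e1, e2, e3] with b h1 h2 h3
    simp only [enorm_eq_nnnorm]
    rw [nnnorm_mul, nnnorm_mul, nnnorm_mul, ENNReal.coe_mul, ENNReal.coe_mul, ENNReal.coe_mul,
      hconj, hconj]
    rw [nnnorm_fracWav θ ρ ψ a b w, nnnorm_fracWav θ ρ χ a b v, nnnorm_fracWav θ ρ φ a b u]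
    have hlast : (‖((|a| ^ (2 * ρ - 3) : ℝ) : ℂ)‖₊ : ℝ≥0∞) =
        ENNReal.ofReal (a ^ (2 * ρ - 3)) := by
      rw [← ofReal_norm_eq_coe_nnnorm, Complex.norm_real, Real.norm_eq_abs,
        _root_.abs_of_nonneg (Real.rpow_nonneg (abs_nonneg a) _), _root_.abs_of_pos ha0]
    rw [hlast, h1, h2, h3, _root_.abs_of_pos ha0, hTdef]
    have hcomb : ENNReal.ofReal (a ^ (-ρ)) * ENNReal.ofReal (a ^ (-ρ)) *
        ENNReal.ofReal (a ^ (-ρ)) * ENNReal.ofReal (a ^ (2 * ρ - 3)) =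
        ENNReal.ofReal (a ^ (-ρ - 3)) := by
      rw [← ENNReal.ofReal_mul (Real.rpow_nonneg ha0.le _),
        ← ENNReal.ofReal_mul (by positivity), ← ENNReal.ofReal_mul (by positivity)]
      congr 1
      rw [← Real.rpow_add ha0, ← Real.rpow_add ha0, ← Real.rpow_add ha0]
      ring_nf
    dsimp only
    rw [← hcomb]
    ring
  have hS1 : ∫⁻ u, (‖basicD θ ρ ψ χ φ u v w‖₊ : ℝ≥0∞) ≤
      ENNReal.ofReal (admConst φ)⁻¹ *
        ∫⁻ u, ∫⁻ a in Set.Ioi (0:ℝ), ∫⁻ b, T a b u := by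
    refine le_trans (lintegral_mono claimA) ?_
    rw [lintegral_const_mul' _ _ ENNReal.ofReal_ne_top]
  -- measurability of the kernel
  have hTm3 : Measurable fun q : (ℝ × ℝ) × ℝ => T q.1.2 q.2 q.1.1 := by
    simp only [hTdef]
    refine Measurable.fun_mul (Measurable.fun_mul ?_ ?_) ?_
    · apply ENNReal.measurable_ofReal.comp
      fun_prop
    · exact (hΨm.comp (by fun_prop)).mul (hΧm.comp (by fun_prop))
    · exact hΦm.comp (by fun_prop)
  have swap1 : ∫⁻ u, ∫⁻ a in Set.Ioi (0:ℝ), ∫⁻ b, T a b u =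
      ∫⁻ a in Set.Ioi (0:ℝ), ∫⁻ u, ∫⁻ b, T a b u := by
    apply lintegral_lintegral_swap
    apply Measurable.aemeasurable
    exact Measurable.lintegral_prod_right (f := fun (p : ℝ × ℝ) (b : ℝ) => T p.2 b p.1) hTm3
  have swap2 : ∀ a : ℝ, ∫⁻ u, ∫⁻ b, T a b u = ∫⁻ b, ∫⁻ u, T a b u := by
    intro a
    apply lintegral_lintegral_swap
    apply Measurable.aemeasurable
    simp only [hTdef]
    refine Measurable.fun_mul (Measurable.fun_mul ?_ ?_) ?_
    · fun_prop
    · exact (hΨm.comp (by fun_prop)).mul (hΧm.comp (by fun_prop))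
    · exact hΦm.comp (by fun_prop)
  -- translation-dilation identity in u
  have inner_u : ∀ a : ℝ, 0 < a → ∀ b : ℝ, ∫⁻ u, T a b u =
      (ENNReal.ofReal (a ^ (-ρ - 3)) * (Ψ ((w - b) / a) * Χ ((v - b) / a))) *
        (ENNReal.ofReal a * P) := by
    intro a ha b
    simp only [hTdef]
    rw [lintegral_const_mul' _ _ (ENNReal.mul_ne_top ENNReal.ofReal_ne_top
      (ENNReal.mul_ne_top coe_ne_top coe_ne_top))]
    rw [lintegral_sub_div Φ hΦm a b ha.ne', _root_.abs_of_pos ha, ← hPdef]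
  set H : ℝ → ℝ≥0∞ := fun t => ∫⁻ s, Ψ s * Χ (s + t) with hHdef
  have hHm : Measurable H := by
    rw [hHdef]
    exact Measurable.lintegral_prod_right (f := fun (t : ℝ) (s : ℝ) => Ψ s * Χ (s + t))
      ((hΨm.comp measurable_snd).mul (hΧm.comp (measurable_snd.add measurable_fst)))
  have inner_b : ∀ a : ℝ, 0 < a →
      (∫⁻ b, (ENNReal.ofReal (a ^ (-ρ - 3)) * (Ψ ((w - b) / a) * Χ ((v - b) / a))) *
        (ENNReal.ofReal a * P)) = ENNReal.ofReal (a ^ (-ρ - 1)) * H ((v - w) / a) * P := by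
    intro a ha
    rw [lintegral_mul_const' _ _ (ENNReal.mul_ne_top ENNReal.ofReal_ne_top hPfin.ne)]
    rw [lintegral_const_mul' _ _ ENNReal.ofReal_ne_top]
    have hb : (∫⁻ b, Ψ ((w - b) / a) * Χ ((v - b) / a)) =
        ENNReal.ofReal a * H ((v - w) / a) := by
      have hrw : ∀ b : ℝ, Ψ ((w - b) / a) * Χ ((v - b) / a) =
          (fun s => Ψ s * Χ (s + (v - w) / a)) ((b - w) / (-a)) := by
        intro b; dsimp only
        have harg1 : (b - w) / (-a) = (w - b) / a := by
          rw [div_neg, ← neg_div, neg_sub]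
        rw [harg1]
        have harg2 : (w - b) / a + (v - w) / a = (v - b) / a := by
          ring
        rw [harg2]
      rw [lintegral_congr hrw,
        lintegral_sub_div (fun s => Ψ s * Χ (s + (v - w) / a))
          (hΨm.mul (hΧm.comp (measurable_add_const _))) (-a) w
          (neg_ne_zero.2 ha.ne'), abs_neg, _root_.abs_of_pos ha, hHdef]
    rw [hb]
    have hcomb2 : ENNReal.ofReal (a ^ (-ρ - 3)) * ENNReal.ofReal a * ENNReal.ofReal a =
        ENNReal.ofReal (a ^ (-ρ - 1)) := by
      rw [← ENNReal.ofReal_mul (Real.rpow_nonneg ha.le _),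
        ← ENNReal.ofReal_mul (by positivity)]
      congr 1
      have h2 : a ^ (-ρ - 1) = a ^ (-ρ - 3) * a ^ (2:ℝ) := by
        rw [← Real.rpow_add ha]; ring_nf
      have h3 : a ^ (2:ℝ) = a * a := by
        rw [show ((2:ℝ)) = ((2:ℕ):ℝ) by norm_num, Real.rpow_natCast]; ring
      rw [h2, h3]; ring
    rw [← hcomb2]
    ring
  have hS : ∫⁻ u, ∫⁻ a in Set.Ioi (0:ℝ), ∫⁻ b, T a b u =
      (∫⁻ a in Set.Ioi (0:ℝ), ENNReal.ofReal (a ^ (-ρ - 1)) * H ((v - w) / a)) * P := by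
    rw [swap1]
    calc ∫⁻ a in Set.Ioi (0:ℝ), ∫⁻ u, ∫⁻ b, T a b u
        = ∫⁻ a in Set.Ioi (0:ℝ), ENNReal.ofReal (a ^ (-ρ - 1)) * H ((v - w) / a) * P := by
          refine setLIntegral_congr_fun measurableSet_Ioi
            (fun a ha => ?_)
          rw [swap2 a, lintegral_congr (fun b => inner_u a ha b), inner_b a ha]
      _ = (∫⁻ a in Set.Ioi (0:ℝ), ENNReal.ofReal (a ^ (-ρ - 1)) * H ((v - w) / a)) * P :=
          lintegral_mul_const' P _ hPfin.ne
  have hca : (0:ℝ) < |v - w| := abs_pos.2 hc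
  have claimD : (∫⁻ a in Set.Ioi (0:ℝ), ENNReal.ofReal (a ^ (-ρ - 1)) * H ((v - w) / a)) ≤
      ENNReal.ofReal (|v - w| ^ (-ρ)) * ∫⁻ t, ENNReal.ofReal (|t| ^ (ρ - 1)) * H t := by
    set c : ℝ := v - w with hcdef
    have hderiv : ∀ a ∈ Set.Ioi (0:ℝ),
        HasDerivWithinAt (fun a : ℝ => c / a) (-c / a ^ 2) (Set.Ioi 0) a := by
      intro a ha
      have ha0 : (0:ℝ) < a := ha
      have h0 := (hasDerivAt_inv ha0.ne').const_mul c
      have e1 : (fun x : ℝ => c * x⁻¹) = fun x : ℝ => c / x := by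
        funext x; rw [div_eq_mul_inv]
      have e2 : c * -(a ^ 2)⁻¹ = -c / a ^ 2 := by field_simp
      rw [e1, e2] at h0
      exact h0.hasDerivWithinAt
    have hinj : Set.InjOn (fun a : ℝ => c / a) (Set.Ioi 0) := by
      intro x hx y hy hxy
      have hx0 : (0:ℝ) < x := hx
      have hy0 : (0:ℝ) < y := hy
      dsimp at hxy
      rw [div_eq_div_iff hx0.ne' hy0.ne'] at hxy
      exact (mul_left_cancel₀ hc hxy).symm
    have hkey := lintegral_image_eq_lintegral_abs_deriv_mul' measurableSet_Ioi hderiv hinj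
      (fun t => ENNReal.ofReal (|c| ^ (-ρ) * |t| ^ (ρ - 1)) * H t)
    have heq : (∫⁻ a in Set.Ioi (0:ℝ), ENNReal.ofReal (a ^ (-ρ - 1)) * H (c / a)) =
        ∫⁻ a in Set.Ioi (0:ℝ), ENNReal.ofReal |(-c / a ^ 2)| *
          ((fun t => ENNReal.ofReal (|c| ^ (-ρ) * |t| ^ (ρ - 1)) * H t) (c / a)) := by
      refine setLIntegral_congr_fun measurableSet_Ioi
        (fun a ha => ?_)
      have ha0 : (0:ℝ) < a := ha
      have h1 : |(-c) / a ^ 2| = |c| / a ^ 2 := by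
        rw [abs_div, abs_neg, _root_.abs_of_pos (pow_pos ha0 2)]
      have h2 : |c / a| = |c| / a := by
        rw [abs_div, _root_.abs_of_pos ha0]
      have key1 : |c| * (|c| ^ (-ρ) * |c| ^ (ρ - 1)) = 1 := by
        have e : |c| ^ (-ρ) * |c| ^ (ρ - 1) = |c| ^ (-(1:ℝ)) := by
          rw [← Real.rpow_add hca]
          congr 1
          ring
        rw [e, Real.rpow_neg_one, mul_inv_cancel₀ hca.ne']
      have key2 : (a ^ 2 * a ^ (ρ - 1) : ℝ) = a ^ (ρ + 1) := by
        have h3 : (a ^ 2 : ℝ) = a ^ ((2:ℕ):ℝ) := by rw [Real.rpow_natCast]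
        rw [h3, ← Real.rpow_add ha0]
        congr 1
        push_cast
        ring
      have hreal : |(-c) / a ^ 2| * (|c| ^ (-ρ) * |c / a| ^ (ρ - 1)) = a ^ (-ρ - 1) := by
        rw [h1, h2, Real.div_rpow (abs_nonneg c) ha0.le]
        calc |c| / a ^ 2 * (|c| ^ (-ρ) * (|c| ^ (ρ - 1) / a ^ (ρ - 1)))
            = (|c| * (|c| ^ (-ρ) * |c| ^ (ρ - 1))) / (a ^ 2 * a ^ (ρ - 1)) := by ring
          _ = 1 / a ^ (ρ + 1) := by rw [key1, key2]
          _ = a ^ (-(ρ + 1)) := by rw [Real.rpow_neg ha0.le, one_div]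
          _ = a ^ (-ρ - 1) := by ring_nf
      dsimp only
      rw [← mul_assoc, ← ENNReal.ofReal_mul (abs_nonneg _), hreal]
    rw [heq, ← hkey]
    refine le_trans (setLIntegral_le_lintegral _ _) ?_
    rw [lintegral_congr (fun t => by
      rw [ENNReal.ofReal_mul (Real.rpow_nonneg (abs_nonneg c) _), mul_assoc])]
    rw [lintegral_const_mul' _ _ ENNReal.ofReal_ne_top]
  -- translation invariance helper
  have htrans : ∀ F : ℝ → ℝ≥0∞, Measurable F → ∀ s : ℝ, ∫⁻ t, F (s + t) = ∫⁻ x, F x := by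
    intro F hF s
    have hrw : ∀ t : ℝ, F (s + t) = F ((t - (-s)) / 1) := fun t => by
      rw [sub_neg_eq_add, div_one, add_comm]
    rw [lintegral_congr hrw, lintegral_sub_div F hF 1 (-s) one_ne_zero]
    simp
  have claimE : (∫⁻ t, ENNReal.ofReal (|t| ^ (ρ - 1)) * H t) ≤
      ENNReal.ofReal (2 ^ (ρ - 1)) * (Aψ * Bχ + Aχ * Bψ) := by
    have step1 : ∀ t : ℝ, ENNReal.ofReal (|t| ^ (ρ - 1)) * H t =
        ∫⁻ s, ENNReal.ofReal (|t| ^ (ρ - 1)) * (Ψ s * Χ (s + t)) := fun t => by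
      rw [hHdef]
      exact (lintegral_const_mul' _ _ ENNReal.ofReal_ne_top).symm
    rw [lintegral_congr step1]
    have step2 : ∀ t s : ℝ, ENNReal.ofReal (|t| ^ (ρ - 1)) * (Ψ s * Χ (s + t)) ≤
        ENNReal.ofReal (2 ^ (ρ - 1)) *
          ((ENNReal.ofReal (|s| ^ (ρ - 1)) * Ψ s) * Χ (s + t) +
            Ψ s * (ENNReal.ofReal (|s + t| ^ (ρ - 1)) * Χ (s + t))) := by
      intro t s
      have hb := rpow_bound hρ s t
      calc ENNReal.ofReal (|t| ^ (ρ - 1)) * (Ψ s * Χ (s + t))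
          ≤ ENNReal.ofReal (2 ^ (ρ - 1) * (|s| ^ (ρ - 1) + |s + t| ^ (ρ - 1))) *
            (Ψ s * Χ (s + t)) := mul_le_mul_left (ENNReal.ofReal_le_ofReal hb) _
        _ = ENNReal.ofReal (2 ^ (ρ - 1)) *
            ((ENNReal.ofReal (|s| ^ (ρ - 1)) * Ψ s) * Χ (s + t) +
              Ψ s * (ENNReal.ofReal (|s + t| ^ (ρ - 1)) * Χ (s + t))) := by
            rw [ENNReal.ofReal_mul (by positivity),
              ENNReal.ofReal_add (by positivity) (by positivity)]
            ring
    refine le_trans (lintegral_mono fun t => lintegral_mono fun s => step2 t s) ?_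
    have hm1 : Measurable fun p : ℝ × ℝ =>
        (ENNReal.ofReal (|p.2| ^ (ρ - 1)) * Ψ p.2) * Χ (p.2 + p.1) :=
      ((ENNReal.measurable_ofReal.comp (by fun_prop)).mul (hΨm.comp measurable_snd)).mul
        (hΧm.comp (measurable_snd.add measurable_fst))
    have hm2 : Measurable fun p : ℝ × ℝ =>
        Ψ p.2 * (ENNReal.ofReal (|p.2 + p.1| ^ (ρ - 1)) * Χ (p.2 + p.1)) :=
      (hΨm.comp measurable_snd).mul
        ((ENNReal.measurable_ofReal.comp (by fun_prop)).mul
          (hΧm.comp (measurable_snd.add measurable_fst)))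
    calc ∫⁻ t, ∫⁻ s, ENNReal.ofReal (2 ^ (ρ - 1)) *
          ((ENNReal.ofReal (|s| ^ (ρ - 1)) * Ψ s) * Χ (s + t) +
            Ψ s * (ENNReal.ofReal (|s + t| ^ (ρ - 1)) * Χ (s + t)))
        = ENNReal.ofReal (2 ^ (ρ - 1)) * ∫⁻ t, ∫⁻ s,
            ((ENNReal.ofReal (|s| ^ (ρ - 1)) * Ψ s) * Χ (s + t) +
              Ψ s * (ENNReal.ofReal (|s + t| ^ (ρ - 1)) * Χ (s + t))) := by
          rw [← lintegral_const_mul' _ _ ENNReal.ofReal_ne_top]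
          exact lintegral_congr fun t => by
            rw [← lintegral_const_mul' _ _ ENNReal.ofReal_ne_top]
      _ = ENNReal.ofReal (2 ^ (ρ - 1)) *
          ((∫⁻ t, ∫⁻ s, (ENNReal.ofReal (|s| ^ (ρ - 1)) * Ψ s) * Χ (s + t)) +
            ∫⁻ t, ∫⁻ s, Ψ s * (ENNReal.ofReal (|s + t| ^ (ρ - 1)) * Χ (s + t))) := by
          congr 1
          rw [← lintegral_add_left (Measurable.lintegral_prod_right
            (f := fun (t : ℝ) (s : ℝ) => (ENNReal.ofReal (|s| ^ (ρ - 1)) * Ψ s) * Χ (s + t)) hm1)]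
          exact lintegral_congr fun t => lintegral_add_left (hm1.comp (measurable_prodMk_left)) _
      _ ≤ ENNReal.ofReal (2 ^ (ρ - 1)) * (Aψ * Bχ + Aχ * Bψ) := by
          refine mul_le_mul_right (add_le_add (le_of_eq ?_) (le_of_eq ?_)) _
          · rw [lintegral_lintegral_swap hm1.aemeasurable]
            calc ∫⁻ s, ∫⁻ t, (ENNReal.ofReal (|s| ^ (ρ - 1)) * Ψ s) * Χ (s + t)
                = ∫⁻ s, (ENNReal.ofReal (|s| ^ (ρ - 1)) * Ψ s) * Bχ := by
                  refine lintegral_congr fun s => ?_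
                  rw [lintegral_const_mul' _ _ (ENNReal.mul_ne_top ENNReal.ofReal_ne_top
                    coe_ne_top), htrans Χ hΧm s, hBχdef]
              _ = Aψ * Bχ := by
                  rw [lintegral_mul_const' _ _ hBχfin.ne, hAψdef]
          · rw [lintegral_lintegral_swap hm2.aemeasurable]
            calc ∫⁻ s, ∫⁻ t, Ψ s * (ENNReal.ofReal (|s + t| ^ (ρ - 1)) * Χ (s + t))
                = ∫⁻ s, Ψ s * Aχ := by
                  refine lintegral_congr fun s => ?_
                  rw [lintegral_const_mul' _ _ coe_ne_top,
                    htrans (fun x => ENNReal.ofReal (|x| ^ (ρ - 1)) * Χ x)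
                      ((ENNReal.measurable_ofReal.comp (by fun_prop)).mul hΧm) s, hAχdef]
              _ = Aχ * Bψ := by
                  rw [lintegral_mul_const' _ _ hAχfin.ne, hBψdef, mul_comm]
  -- assemble the ℝ≥0∞ bound
  set E : ℝ≥0∞ := ENNReal.ofReal (admConst φ)⁻¹ *
      (ENNReal.ofReal (|v - w| ^ (-ρ)) *
        (ENNReal.ofReal (2 ^ (ρ - 1)) * (Aψ * Bχ + Aχ * Bψ)) * P) with hEdef
  have hmain : (∫⁻ u, (‖basicD θ ρ ψ χ φ u v w‖₊ : ℝ≥0∞)) ≤ E := by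
    refine hS1.trans ?_
    rw [hS, hEdef]
    refine mul_le_mul_right ?_ _
    refine mul_le_mul_left ?_ _
    exact claimD.trans (mul_le_mul_right claimE _)
  have hsumfin : (Aψ * Bχ + Aχ * Bψ) ≠ ⊤ := (ENNReal.add_ne_top).2
    ⟨ENNReal.mul_ne_top hAψfin.ne hBχfin.ne, ENNReal.mul_ne_top hAχfin.ne hBψfin.ne⟩
  have hEfin : E ≠ ⊤ := by
    rw [hEdef]
    exact ENNReal.mul_ne_top ENNReal.ofReal_ne_top
      (ENNReal.mul_ne_top (ENNReal.mul_ne_top ENNReal.ofReal_ne_top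
        (ENNReal.mul_ne_top ENNReal.ofReal_ne_top hsumfin)) hPfin.ne)
  have hEreal : E.toReal = (admConst φ)⁻¹ * 2 ^ (ρ - 1) * |v - w| ^ (-ρ) *
      (Aψ.toReal * Bχ.toReal + Aχ.toReal * Bψ.toReal) * P.toReal := by
    rw [hEdef]
    simp only [ENNReal.toReal_mul]
    rw [ENNReal.toReal_add (ENNReal.mul_ne_top hAψfin.ne hBχfin.ne)
        (ENNReal.mul_ne_top hAχfin.ne hBψfin.ne),
      ENNReal.toReal_mul, ENNReal.toReal_mul,
      ENNReal.toReal_ofReal (inv_nonneg.2 hCpos.le),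
      ENNReal.toReal_ofReal (Real.rpow_nonneg (abs_nonneg _) _),
      ENNReal.toReal_ofReal (Real.rpow_nonneg (by norm_num : (0:ℝ) ≤ 2) _)]
    ring
  rw [hAψe, hAχe, hBψe, hBχe, hPe]
  by_cases hIntg : Integrable (fun u => ‖basicD θ ρ ψ χ φ u v w‖) volume
  · rw [MeasureTheory.integral_eq_lintegral_of_nonneg_ae
      (Filter.Eventually.of_forall fun u => norm_nonneg _) hIntg.aestronglyMeasurable]
    simp_rw [ofReal_norm_eq_coe_nnnorm]
    rw [← hEreal]
    exact ENNReal.toReal_mono hEfin hmain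
  · rw [integral_undef hIntg, ← hEreal]
    exact ENNReal.toReal_nonneg
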